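/- For every ε ∈ [0, 1/2], the distributions P₀ and P₁ satisfy TV(P₀, P₁) ≥ (1/2) KL(P₁ ‖ P₀). -/
import Mathlib


/-!
Statement 4 (prop:dist_bd): with Ω = {0,1}, for every ε ∈ [0, 1/2],
TV(P₀, P₁) ≥ (1/2)·KL(P₁ ‖ P₀), where P₀ is the uniform distribution on Ω³ and P₁ is
the distribution with Y uniform and independent of (X,Z), P₁(X=x,Z=x) = (1−ε)/2,
P₁(X=x,Z=1−x) = ε/2.  KL is taken with base-2 logarithms.
-/

open scoped BigOperators

noncomputable section

/-- The binary alphabet Ω = {0,1}. -/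
abbrev Om : Type := Bool

/-- P₀: the uniform distribution on Ω³ (coordinates (X, Y, Z)). -/
def Pzero : Om × Om × Om → ℝ := fun _ => 1 / 8

/-- P₁: Y uniform and independent of (X, Z); the (X,Z)-marginal puts mass (1−ε)/2 on
each diagonal pair (x, x) and mass ε/2 on each off-diagonal pair (x, 1−x).
Coordinates ordered as (X, Y, Z). -/
def Pone (ε : ℝ) : Om × Om × Om → ℝ :=
  fun w => (1 / 2) * (if w.2.2 = w.1 then (1 - ε) / 2 else ε / 2)

/-- KL divergence with base-2 logarithms: `KL(P‖Q) = Σ_w P(w) log₂(P(w)/Q(w))`,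
with the convention that terms with `P(w) = 0` vanish. -/
def klDivb2 (p q : Om × Om × Om → ℝ) : ℝ :=
  ∑ w, if p w = 0 then 0 else p w * Real.logb 2 (p w / q w)

/-- Total variation distance `TV(P,Q) = (1/2) Σ_w |P(w) − Q(w)|`. -/
def tvDist (p q : Om × Om × Om → ℝ) : ℝ :=
  (1 / 2) * ∑ w, |p w - q w|


private lemma binEnt_ge_aux (ε : ℝ) (h0 : 0 ≤ ε) (h1 : ε ≤ 1/2) :
    2*ε*Real.log 2 ≤ Real.binEntropy ε := by
  have hc := Real.strictConcave_binEntropy.concaveOn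
  have h := hc.2 (by norm_num : (0:ℝ) ∈ Set.Icc (0:ℝ) 1)
    (by norm_num : (2⁻¹:ℝ) ∈ Set.Icc (0:ℝ) 1)
    (by linarith : (0:ℝ) ≤ 1 - 2*ε) (by linarith : (0:ℝ) ≤ 2*ε) (by ring)
  simp only [smul_eq_mul] at h
  rw [Real.binEntropy_zero, Real.binEntropy_two_inv,
    show (1-2*ε)*0 + 2*ε*2⁻¹ = ε by ring] at h
  linarith

private lemma key_aux (ε : ℝ) (h0 : 0 ≤ ε) (h1 : ε ≤ 1/2) :
    (1-ε) * Real.logb 2 (2 - 2*ε) + ε * Real.logb 2 (2*ε) ≤ 1 - 2*ε := by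
  have hl2 : (0:ℝ) < Real.log 2 := Real.log_pos (by norm_num)
  have h1e : (0:ℝ) < 1 - ε := by linarith
  have hs : (1-ε)*Real.log (2-2*ε) + ε*Real.log (2*ε) ≤ (1-2*ε)*Real.log 2 := by
    have e1 : Real.log (2-2*ε) = Real.log 2 + Real.log (1-ε) := by
      rw [show (2:ℝ)-2*ε = 2*(1-ε) by ring, Real.log_mul two_ne_zero h1e.ne']
    rcases eq_or_lt_of_le h0 with he | he
    · rw [← he]; norm_num
    · have e2 : Real.log (2*ε) = Real.log 2 + Real.log ε :=
        Real.log_mul two_ne_zero he.ne'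
      have hb := binEnt_ge_aux ε h0 h1
      rw [Real.binEntropy, Real.log_inv, Real.log_inv] at hb
      rw [e1, e2]; nlinarith [hb]
  calc (1-ε) * Real.logb 2 (2 - 2*ε) + ε * Real.logb 2 (2*ε)
      = ((1-ε)*Real.log (2-2*ε) + ε*Real.log (2*ε)) / Real.log 2 := by
        rw [Real.logb, Real.logb]; ring
    _ ≤ ((1-2*ε)*Real.log 2) / Real.log 2 := by gcongr
    _ = 1 - 2*ε := by field_simp

private lemma kl_eval_aux (ε : ℝ) : klDivb2 (Pone ε) Pzero =
    4 * ((1-ε)/4 * Real.logb 2 (((1-ε)/4)/(1/8))) + 4 * (ε/4 * Real.logb 2 ((ε/4)/(1/8))) := by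
  have h : ∀ p q : Om × Om × Om → ℝ, klDivb2 p q = ∑ w, p w * Real.logb 2 (p w / q w) := by
    intro p q
    refine Finset.sum_congr rfl fun w _ => ?_
    split <;> simp_all
  rw [h]
  simp [Pone, Pzero, Fintype.sum_prod_type]
  ring_nf

private lemma tv_eval_aux (ε : ℝ) (h0 : 0 ≤ ε) (h1 : ε ≤ 1/2) :
    tvDist Pzero (Pone ε) = (1 - 2*ε)/2 := by
  have ha : |(1:ℝ)/8 - (1/2)*((1-ε)/2)| = (1-2*ε)/8 := by
    rw [abs_of_nonpos (by linarith)]; ring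
  have hb : |(1:ℝ)/8 - (1/2)*(ε/2)| = (1-2*ε)/8 := by
    rw [abs_of_nonneg (by linarith)]; ring
  simp only [tvDist, Pone, Pzero, Fintype.sum_prod_type, Fintype.sum_bool]
  norm_num
  rw [ha, hb]; ring

/-- **Proposition prop:dist_bd of the paper.**  For every ε ∈ [0, 1/2],
`TV(P₀, P₁) ≥ (1/2) KL(P₁ ‖ P₀)`. -/
theorem tv_lower_bound_by_kl (ε : ℝ) (hε : ε ∈ Set.Icc (0 : ℝ) (1 / 2)) :
    (1 / 2) * klDivb2 (Pone ε) Pzero ≤ tvDist Pzero (Pone ε) := by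
  obtain ⟨h0, h1⟩ := hε
  rw [kl_eval_aux, tv_eval_aux ε h0 h1]
  have hk := key_aux ε h0 h1
  have e1 : ((1-ε)/4)/((1:ℝ)/8) = 2 - 2*ε := by ring
  have e2 : (ε/4)/((1:ℝ)/8) = 2*ε := by ring
  rw [e1, e2]
  nlinarith [hk]

end
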